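/- There exists a constant c > 0 such that for all sufficiently large n and all integers 0 ≤ i ≤ I: (a) φ(iδ) ≤ 1 and φ(iδ) ≥ c·n^{-1.5ε}; (b) Φ(iδ) ≤ ln n; (c) if i ≥ 1 then Φ(iδ) ≥ c·n^{-ε}. -/

import Mathlib

open MeasureTheory Finset Filter

namespace TF

noncomputable section
open scoped Classical

/-- Edges of the complete graph on `Fin n` are elements of `Sym2 (Fin n)`. -/
abbrev Edge (n : ℕ) := Sym2 (Fin n)

/-- The edge set of the complete graph `K_n` (non-diagonal pairs). -/
def allEdges (n : ℕ) : Finset (Edge n) := Finset.univ.filter (fun e => ¬ e.IsDiag)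

/-- Three edges form a triangle. -/
def IsTri {n : ℕ} (e f g : Edge n) : Prop :=
  ∃ a b c : Fin n, a ≠ b ∧ b ≠ c ∧ a ≠ c ∧ e = s(a, b) ∧ f = s(b, c) ∧ g = s(a, c)

/-- An edge set is triangle-free. -/
def TriFree {n : ℕ} (T : Finset (Edge n)) : Prop :=
  ∀ e ∈ T, ∀ f ∈ T, ∀ g ∈ T, ¬ IsTri e f g

/-- Adding `e` to `T` does not create a triangle. -/
def AddOK {n : ℕ} (T : Finset (Edge n)) (e : Edge n) : Prop :=
  ∀ f ∈ T, ∀ g ∈ T, ¬ IsTri e f g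

/-- Traverse a list of edges, adding each to the current graph unless
its addition creates a triangle (or it is a loop). -/
def greedy {n : ℕ} (T : Finset (Edge n)) : List (Edge n) → Finset (Edge n)
  | [] => T
  | e :: l => if AddOK T e ∧ ¬ e.IsDiag then greedy (insert e T) l else greedy T l

/-- The edges of `s`, listed in increasing order of birthtime. -/
def sortByBirth {n : ℕ} (β : Edge n → ℝ) (s : Finset (Edge n)) : List (Edge n) :=
  s.toList.mergeSort (fun a b => β a ≤ β b)

/-- `δ := 1/⌊n^ε⌋`. -/
def del (n : ℕ) (ε : ℝ) : ℝ := 1 / (⌊(n : ℝ) ^ ε⌋₊ : ℝ)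

/-- `I := δ^{-2} = ⌊n^ε⌋²`. -/
def Inat (n : ℕ) (ε : ℝ) : ℕ := (⌊(n : ℝ) ^ ε⌋₊) ^ 2

/-- `M := n^{20000ε}`. -/
def Mc (n : ℕ) (ε : ℝ) : ℝ := (n : ℝ) ^ (20000 * ε)

/-- The imaginary error function `erfi(x) = (2/√π)∫₀ˣ exp(t²) dt`. -/
def erfi (x : ℝ) : ℝ := (2 / Real.sqrt Real.pi) * ∫ t in (0:ℝ)..x, Real.exp (t ^ 2)

/-- `Φ` is the inverse function of `y ↦ (√π/2)·erfi y`; equivalently it is the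
solution of `Φ(0) = 0`, `Φ'(x) = exp (-Φ(x)²)`. -/
def Phi : ℝ → ℝ := Function.invFun (fun y : ℝ => (Real.sqrt Real.pi / 2) * erfi y)

/-- `φ(x) := exp (-Φ(x)²)`, the derivative of `Φ`. -/
def phi (x : ℝ) : ℝ := Real.exp (-(Phi x) ^ 2)

/-- `m := ⌊n^{100ε}⌋·φ(iδ)⁻¹`. -/
def mc (n : ℕ) (ε : ℝ) (i : ℕ) : ℝ := (⌊(n : ℝ) ^ (100 * ε)⌋₊ : ℝ) * (phi (i * del n ε))⁻¹

/-- `γ(i) := max{δΦ(iδ)φ(iδ), δ²φ(iδ)²}`. -/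
def gam (n : ℕ) (ε : ℝ) (i : ℕ) : ℝ :=
  max (del n ε * Phi (i * del n ε) * phi (i * del n ε))
      (del n ε ^ 2 * phi (i * del n ε) ^ 2)

/-- `Γ(0) := n^{-30ε}`, `Γ(i) := Γ(i-1)(1 + 10γ(i-1))`. -/
def Gam (n : ℕ) (ε : ℝ) : ℕ → ℝ
  | 0 => (n : ℝ) ^ (-30 * ε)
  | i + 1 => Gam n ε i * (1 + 10 * gam n ε i)

/-- `x = a(1 ± b)`, i.e. `a(1-b) ≤ x ≤ a(1+b)`. -/
def within (x a b : ℝ) : Prop := a * (1 - b) ≤ x ∧ x ≤ a * (1 + b)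

/-- The uniform probability measure on a set of reals. -/
def unif (s : Set ℝ) : Measure ℝ := (volume s)⁻¹ • volume.restrict s

/-- The product measure under which every edge of `K_n` receives an
independent uniform birthtime in `[0,1]`. -/
def stepMeasure (n : ℕ) : Measure (Edge n → ℝ) :=
  Measure.pi fun _ => unif (Set.Icc 0 1)

/-- `Λ₀(g,i)`: pairs `{g₁,g₂} ⊆ TF_i` forming a triangle with `g`. -/
def Lam0 {n : ℕ} (TFi : Finset (Edge n)) (g : Edge n) : Finset (Finset (Edge n)) :=
  (TFi.powersetCard 2).filter
    (fun P => ∃ g1 ∈ P, ∃ g2 ∈ P, g1 ≠ g2 ∧ IsTri g g1 g2)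

/-- `Λ₁(g,i)`: singletons (identified with edges) `g₁ ∉ B_{≤i}` such that some
`g₂ ∈ TF_i` makes `{g,g₁,g₂}` a triangle and `TF_i ∪ {g₁}` is triangle-free. -/
def Lam1 {n : ℕ} (TFi Bprev : Finset (Edge n)) (g : Edge n) : Finset (Edge n) :=
  (allEdges n \ Bprev).filter
    (fun g1 => (∃ g2 ∈ TFi, IsTri g g1 g2) ∧ TriFree (insert g1 TFi))

/-- `Λ₂(g,i)`: pairs `{g₁,g₂} ⊆ K_n ∖ B_{≤i}` forming a triangle with `g`
such that `TF_i ∪ {g_j}` is triangle-free for both `j ∈ {1,2}`. -/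
def Lam2 {n : ℕ} (TFi Bprev : Finset (Edge n)) (g : Edge n) : Finset (Finset (Edge n)) :=
  ((allEdges n \ Bprev).powersetCard 2).filter
    (fun P => (∃ g1 ∈ P, ∃ g2 ∈ P, g1 ≠ g2 ∧ IsTri g g1 g2) ∧
      ∀ f ∈ P, TriFree (insert f TFi))

/-- The process is well-behaved at step `i` (the precondition of the
key lemma), for a given instance `(TF_i, B_{≤i})`. -/
def WellBehaved (n : ℕ) (ε : ℝ) (i : ℕ) (TFi Bprev : Finset (Edge n)) : Prop :=
  (∀ g ∈ allEdges n, ((Lam0 TFi g).card : ℝ) ≤ i * (n : ℝ) ^ (5 * ε) ∧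
      ((Lam1 TFi Bprev g).card : ℝ) ≤ i * Real.sqrt n) ∧
  (∀ g ∈ allEdges n \ Bprev,
    within ((Lam1 TFi Bprev g).card : ℝ)
      (2 * Real.sqrt n * Phi (i * del n ε) * phi (i * del n ε)) (Gam n ε i) ∧
    within ((Lam2 TFi Bprev g).card : ℝ)
      ((n : ℝ) * phi (i * del n ε) ^ 2) (Gam n ε i))

/-- Structural properties of any instance of the state `(TF_i, B_{≤i})` of the
process: `TF_i ⊆ B_{≤i} ⊆ K_n` and `TF_i` is triangle-free. -/
def Instance (n : ℕ) (TFi Bprev : Finset (Edge n)) : Prop :=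
  TFi ⊆ Bprev ∧ Bprev ⊆ allEdges n ∧ TriFree TFi

/-- The set `B_{i+1}` determined by the fresh birthtimes `β = β_{i+1}`. -/
def Bnext (n : ℕ) (ε : ℝ) (Bprev : Finset (Edge n)) (β : Edge n → ℝ) : Finset (Edge n) :=
  (allEdges n \ Bprev).filter (fun f => β f < del n ε * (n : ℝ) ^ (-(1:ℝ)/2))

/-- The graph `TF_{i+1}`, obtained by traversing the edges of `B_{i+1}` in
increasing order of birthtime, adding each unless a triangle is created. -/
def TFnext (n : ℕ) (ε : ℝ) (TFi Bprev : Finset (Edge n)) (β : Edge n → ℝ) : Finset (Edge n) :=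
  greedy TFi (sortByBirth β (Bnext n ε Bprev β))

/-- `B^⋆_{i+1}` as a function of the birthtimes: the edges outside `B_{≤i}`
with birthtime below `M·n^{-1/2}`. -/
def BstarOf (n : ℕ) (ε : ℝ) (Bprev : Finset (Edge n)) (β : Edge n → ℝ) : Finset (Edge n) :=
  (allEdges n \ Bprev).filter (fun f => β f < Mc n ε * (n : ℝ) ^ (-(1:ℝ)/2))

/-- `B^*_{i+1}` as a function of the birthtimes: the edges outside `B_{≤i}`
with birthtime below `m·n^{-1/2}`. -/
def BsubOf (n : ℕ) (ε : ℝ) (i : ℕ) (Bprev : Finset (Edge n)) (β : Edge n → ℝ) : Finset (Edge n) :=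
  (allEdges n \ Bprev).filter (fun f => β f < mc n ε i * (n : ℝ) ^ (-(1:ℝ)/2))

/-- `Λ^⋆₁`-type family: members of `Λ₁` contained in the selected edge set. -/
def LamS1 {n : ℕ} (TFi Bprev Bsel : Finset (Edge n)) (g : Edge n) : Finset (Edge n) :=
  (Lam1 TFi Bprev g).filter (fun e => e ∈ Bsel)

/-- `Λ^⋆₂`-type family: members of `Λ₂` contained in the selected edge set. -/
def LamS2 {n : ℕ} (TFi Bprev Bsel : Finset (Edge n)) (g : Edge n) : Finset (Finset (Edge n)) :=
  (Lam2 TFi Bprev g).filter (fun P => P ⊆ Bsel)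

/-- `Λ^{⋆⋆}₂`: members of `Λ₂` meeting the selected edge set in one edge. -/
def LamSS2 {n : ℕ} (TFi Bprev Bsel : Finset (Edge n)) (g : Edge n) : Finset (Finset (Edge n)) :=
  (Lam2 TFi Bprev g).filter (fun P => (P ∩ Bsel).card = 1)

/-- The event `E^⋆(h)`: properties P1–P4. -/
def Estar (n : ℕ) (ε : ℝ) (i : ℕ) (TFi Bprev Bstar : Finset (Edge n)) (h : ℝ) : Prop :=
  (∀ g ∈ allEdges n \ Bprev,
    within ((LamS1 TFi Bprev Bstar g).card : ℝ)
      (2 * Mc n ε * Phi (i * del n ε) * phi (i * del n ε))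
      (Gam n ε i + h * Gam n ε i * gam n ε i) ∧
    within ((LamS2 TFi Bprev Bstar g).card : ℝ)
      (Mc n ε ^ 2 * phi (i * del n ε) ^ 2)
      (Gam n ε i + h * Gam n ε i * gam n ε i) ∧
    within ((LamSS2 TFi Bprev Bstar g).card : ℝ)
      (2 * Mc n ε * Real.sqrt n * phi (i * del n ε) ^ 2)
      (Gam n ε i + h * Gam n ε i * gam n ε i)) ∧
  (∀ w x y : Fin n, w ≠ x → x ≠ y → w ≠ y →
    s(w, x) ∉ Bprev → s(x, y) ∉ Bprev →
    (((Finset.univ.filter (fun z : Fin n => z ≠ w ∧ z ≠ x ∧ z ≠ y ∧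
        s(w, z) ∈ TFi ∧ s(y, z) ∈ TFi ∧ s(x, z) ∈ Bstar)).card : ℝ) ≤ Real.log n ^ 2 ∧
     ((Finset.univ.filter (fun z : Fin n => z ≠ w ∧ z ≠ x ∧ z ≠ y ∧
        s(w, z) ∈ TFi ∧ s(x, z) ∈ Bstar ∧ s(y, z) ∈ Bstar)).card : ℝ) ≤ Real.log n ^ 2 ∧
     ((Finset.univ.filter (fun z : Fin n => z ≠ w ∧ z ≠ x ∧ z ≠ y ∧
        s(w, z) ∈ TFi ∧ s(x, z) ∉ Bprev ∧ s(y, z) ∈ Bstar)).card : ℝ) ≤ Mc n ε ^ 2)) ∧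
  (∀ x y : Fin n, x ≠ y →
    ((Finset.univ.filter (fun z : Fin n => z ≠ x ∧ z ≠ y ∧
        s(x, z) ∈ Bstar ∧ s(y, z) ∈ Bstar)).card : ℝ) ≤ 2 * Mc n ε ^ 2) ∧
  (∀ x : Fin n,
    ((Finset.univ.filter (fun y : Fin n => y ≠ x ∧ s(x, y) ∈ Bstar)).card : ℝ)
      ≤ 2 * Mc n ε * Real.sqrt n)

/-- The children (labeled by sets of edges) of a tree node labeled `g` whose
grandparent is labeled `prev`, in the tree built from the selected edge set
`Bsel` (`Bsel = B^⋆_{i+1}` gives `T^⋆`, `Bsel = B^*_{i+1}` gives `T^*`). -/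
def childSets {n : ℕ} (TFi Bprev Bsel : Finset (Edge n)) (g : Edge n) :
    Option (Edge n) → Finset (Finset (Edge n))
  | none => (LamS1 TFi Bprev Bsel g).image (fun e => {e}) ∪ LamS2 TFi Bprev Bsel g
  | some g' => ((LamS2 TFi Bprev Bsel g).filter (fun G => g' ∉ G)) ∪
      ((LamS1 TFi Bprev Bsel g).filter
        (fun e => e ≠ g' ∧ ¬ IsTri e g g')).image (fun e => {e})

/-- Survival of a tree node labeled `g` with grandparent label `prev`, when
the birthtime of the node's label is `b` and `l` further generations follow:
a non-leaf node survives iff for every child `G` all of whose edges have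
birthtime below `min{b, δn^{-1/2}}`, some child of `G` does not survive. -/
def surv (n : ℕ) (ε : ℝ) (TFi Bprev Bsel : Finset (Edge n)) (β : Edge n → ℝ) :
    ℕ → Edge n → Option (Edge n) → ℝ → Prop
  | 0, _, _, _ => True
  | l + 1, g, prev, b => ∀ G ∈ childSets TFi Bprev Bsel g prev,
      (∀ f ∈ G, β f < min b (del n ε * (n : ℝ) ^ (-(1:ℝ)/2))) →
      ∃ f ∈ G, ¬ surv n ε TFi Bprev Bsel β l f (some g) (β f)

/-- The event `A_{g,l}`: the root of `T_{g,l}` survives. -/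
def Aev (n : ℕ) (ε : ℝ) (TFi Bprev Bsel : Finset (Edge n)) (β : Edge n → ℝ)
    (l : ℕ) (g : Edge n) : Prop :=
  surv n ε TFi Bprev Bsel β l g none (β g)

/-- The event `A_{F,l} := ∩_{f ∈ F} A_{f,l}`. -/
def AevF (n : ℕ) (ε : ℝ) (TFi Bprev Bsel : Finset (Edge n)) (β : Edge n → ℝ)
    (l : ℕ) (F : Finset (Edge n)) : Prop :=
  ∀ f ∈ F, Aev n ε TFi Bprev Bsel β l f

/-- The conditional distribution of the birthtimes `β_{i+1}` given that
`B^⋆_{i+1} = Bstar` was chosen, that the edges of `F1` fall in `B_{i+1}`,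
and that the edges of `Fex` do not fall in `B_{i+1}`. -/
def condM (n : ℕ) (ε : ℝ) (Bprev Bstar F1 Fex : Finset (Edge n)) : Measure (Edge n → ℝ) :=
  Measure.pi fun e =>
    if e ∈ F1 then unif (Set.Ico 0 (del n ε * (n : ℝ) ^ (-(1:ℝ)/2)))
    else if e ∈ Fex then
      (if e ∈ Bstar then
          unif (Set.Ico (del n ε * (n : ℝ) ^ (-(1:ℝ)/2)) (Mc n ε * (n : ℝ) ^ (-(1:ℝ)/2)))
        else unif (Set.Ioc (Mc n ε * (n : ℝ) ^ (-(1:ℝ)/2)) 1))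
    else if e ∈ Bstar then unif (Set.Ico 0 (Mc n ε * (n : ℝ) ^ (-(1:ℝ)/2)))
    else if e ∈ Bprev then unif (Set.Icc 0 1)
    else unif (Set.Ioc (Mc n ε * (n : ℝ) ^ (-(1:ℝ)/2)) 1)

/-- As `condM`, but additionally given that `B^*_{i+1} = Bsub` was chosen. -/
def condM2 (n : ℕ) (ε : ℝ) (i : ℕ) (Bprev Bstar Bsub F1 Fex : Finset (Edge n)) :
    Measure (Edge n → ℝ) :=
  Measure.pi fun e =>
    if e ∈ F1 then unif (Set.Ico 0 (del n ε * (n : ℝ) ^ (-(1:ℝ)/2)))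
    else if e ∈ Fex then
      (if e ∈ Bsub then
          unif (Set.Ico (del n ε * (n : ℝ) ^ (-(1:ℝ)/2)) (mc n ε i * (n : ℝ) ^ (-(1:ℝ)/2)))
        else if e ∈ Bstar then
          unif (Set.Ico (mc n ε i * (n : ℝ) ^ (-(1:ℝ)/2)) (Mc n ε * (n : ℝ) ^ (-(1:ℝ)/2)))
        else unif (Set.Ioc (Mc n ε * (n : ℝ) ^ (-(1:ℝ)/2)) 1))
    else if e ∈ Bsub then unif (Set.Ico 0 (mc n ε i * (n : ℝ) ^ (-(1:ℝ)/2)))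
    else if e ∈ Bstar then
      unif (Set.Ico (mc n ε i * (n : ℝ) ^ (-(1:ℝ)/2)) (Mc n ε * (n : ℝ) ^ (-(1:ℝ)/2)))
    else if e ∈ Bprev then unif (Set.Icc 0 1)
    else unif (Set.Ioc (Mc n ε * (n : ℝ) ^ (-(1:ℝ)/2)) 1)

/-- A descending path of labels from a (root) node labeled `g` whose
grandparent label is `prev`: each step records the label of a set-node
together with the label of one of its edge-children. -/
def chain {n : ℕ} (TFi Bprev Bsel : Finset (Edge n)) :
    Edge n → Option (Edge n) → List (Finset (Edge n) × Edge n) → Prop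
  | _, _, [] => True
  | g, prev, (G, g') :: rest =>
      G ∈ childSets TFi Bprev Bsel g prev ∧ g' ∈ G ∧ chain TFi Bprev Bsel g' (some g) rest

/-- The (edge) label of the node-at-even-distance reached by a path. -/
def lbl {n : ℕ} (f : Edge n) (path : List (Finset (Edge n) × Edge n)) : Edge n :=
  (path.map Prod.snd).getLastD f

/-- The label of the grandparent of the node reached by a path. -/
def prevLbl {n : ℕ} (f : Edge n) (path : List (Finset (Edge n) × Edge n)) : Option (Edge n) :=
  if path.isEmpty then none else some (lbl f path.dropLast)

/-- The event `E^*_F`: an edge labeling a node at even distance from the root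
of a tree of `T^*_{F,L}` labels no other such node. -/
def EstarF (n : ℕ) (TFi Bprev Bsub : Finset (Edge n)) (L : ℕ) (F : Finset (Edge n)) : Prop :=
  ∀ f ∈ F, ∀ f' ∈ F, ∀ path path' : List (Finset (Edge n) × Edge n),
    chain TFi Bprev Bsub f none path → chain TFi Bprev Bsub f' none path' →
    path.length ≤ L → path'.length ≤ L →
    lbl f path = lbl f' path' → f = f' ∧ path = path'

/-- The event `E^*`. -/
def EstarSub (n : ℕ) (ε : ℝ) (i : ℕ) (TFi Bprev Bsub : Finset (Edge n)) : Prop :=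
  ∀ g ∈ allEdges n \ Bprev,
    within ((LamS1 TFi Bprev Bsub g).card : ℝ)
      (2 * mc n ε i * Phi (i * del n ε) * phi (i * del n ε)) (1.01 * Gam n ε i) ∧
    within ((LamS2 TFi Bprev Bsub g).card : ℝ)
      (mc n ε i ^ 2 * phi (i * del n ε) ^ 2) (1.01 * Gam n ε i)

/-- The iterates `p_l` of the limiting survival recursion (with `c1 = φ(iδ)`
and `c2 = Φ(iδ)`): `p₀ ≡ 1` and
`p_{l+1}(x) = exp(-P_l(x)²c₁² - 2P_l(x)c₂c₁)` where `P_l(x) := ∫₀ˣ p_l`. -/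
def plim (c1 c2 : ℝ) : ℕ → ℝ → ℝ
  | 0 => fun _ => 1
  | l + 1 => fun x =>
      Real.exp (-(∫ y in (0:ℝ)..x, plim c1 c2 l y) ^ 2 * c1 ^ 2 -
        2 * (∫ y in (0:ℝ)..x, plim c1 c2 l y) * c2 * c1)

/-- The staged triangle-free process: `stage i = (TF_i, B_{≤i})`. -/
def stage (n : ℕ) (ε : ℝ) (β : ℕ → Edge n → ℝ) : ℕ → Finset (Edge n) × Finset (Edge n)
  | 0 => (∅, ∅)
  | i + 1 =>
      let p := stage n ε β i
      (TFnext n ε p.1 p.2 (β (i + 1)), p.2 ∪ Bnext n ε p.2 (β (i + 1)))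

/-- The sample space for the stages `0,…,I` of the process: independent
uniform birthtimes in `[0,1]` for every stage and every edge. -/
def stagesMeasure (n : ℕ) (ε : ℝ) : Measure (Fin (Inat n ε + 1) → Edge n → ℝ) :=
  Measure.pi fun _ => stepMeasure n

/-- Extend a finitely-indexed family of birthtimes to all stages. -/
def extendB (n : ℕ) (ε : ℝ) (ω : Fin (Inat n ε + 1) → Edge n → ℝ) : ℕ → Edge n → ℝ :=
  fun k => if h : k < Inat n ε + 1 then ω ⟨k, h⟩ else fun _ => 0

/-- `TF_I` as a function of the birthtimes. -/
def TFI (n : ℕ) (ε : ℝ) (ω : Fin (Inat n ε + 1) → Edge n → ℝ) : Finset (Edge n) :=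
  (stage n ε (extendB n ε ω) (Inat n ε)).1

/-- The final graph `TF(n)` of the (one-shot) triangle-free process. -/
def TFone (n : ℕ) (β : Edge n → ℝ) : Finset (Edge n) :=
  greedy ∅ (sortByBirth β (allEdges n))

/-- `TF(n,p) := TF(n) ∩ {f : β(f) ≤ p}`. -/
def TFnp (n : ℕ) (β : Edge n → ℝ) (p : ℝ) : Finset (Edge n) :=
  (TFone n β).filter (fun f => β f ≤ p)

/-- `Fn` is a copy of the graph `F` inside `K_n`. -/
def IsCopy {V : Type*} (F : SimpleGraph V) {n : ℕ} (Fn : Finset (Edge n)) : Prop :=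
  ∃ φ : V → Fin n, Function.Injective φ ∧
    (∀ e, e ∈ Fn ↔ ∃ a b, F.Adj a b ∧ e = s(φ a, φ b))

/-- The number of copies of `F` in the graph on `Fin n` with edge set `T`
(= #{injective adjacency-preserving maps} / #{automorphisms of F}). -/
def numCopies {V : Type*} [Fintype V] (F : SimpleGraph V) {n : ℕ} (T : Finset (Edge n)) : ℝ :=
  (Nat.card {φ : V → Fin n // Function.Injective φ ∧
      ∀ a b, F.Adj a b → s(φ a, φ b) ∈ T} : ℝ) / (Nat.card (F ≃g F) : ℝ)

/-- The number of edges `e_F` of a graph `F`. -/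
def eCard {V : Type*} (F : SimpleGraph V) : ℕ := Nat.card F.edgeSet

/-- `F` is balanced: `e_F/v_F ≥ e_H/v_H` for every subgraph `H ⊆ F`
with at least one vertex. -/
def Balanced {V : Type*} [Fintype V] (F : SimpleGraph V) : Prop :=
  ∀ H : F.Subgraph, H.verts.Nonempty →
    (Nat.card H.edgeSet : ℝ) / (Nat.card H.verts : ℝ) ≤
      (eCard F : ℝ) / (Fintype.card V : ℝ)

end

end TF

namespace TF
noncomputable section
open scoped Classical



noncomputable def Faux (y : ℝ) : ℝ := ∫ t in (0:ℝ)..y, Real.exp (t ^ 2)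

lemma contE : Continuous fun t : ℝ => Real.exp (t ^ 2) := by continuity

lemma intE (a b : ℝ) : IntervalIntegrable (fun t : ℝ => Real.exp (t ^ 2)) volume a b :=
  contE.intervalIntegrable a b

lemma Faux2cont : Continuous Faux := intervalIntegral.continuous_primitive intE 0

lemma Faux2strictMono : StrictMono Faux := by
  intro a b hab
  have h1 : Faux b = Faux a + ∫ t in a..b, Real.exp (t ^ 2) := by
    rw [Faux, Faux, ← intervalIntegral.integral_add_adjacent_intervals (intE 0 a) (intE a b)]
  have h2 : 0 < ∫ t in a..b, Real.exp (t ^ 2) :=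
    intervalIntegral.intervalIntegral_pos_of_pos_on (intE a b)
      (fun x _ => Real.exp_pos _) hab
  linarith

lemma Faux2lb (y : ℝ) (hy : 0 ≤ y) : y ≤ Faux y := by
  have := intervalIntegral.integral_mono_on (μ := volume) (a := 0) (b := y)
    (f := fun _ : ℝ => (1:ℝ)) (g := fun t : ℝ => Real.exp (t ^ 2)) hy
    (intervalIntegrable_const) (intE 0 y)
    (fun x _ => Real.one_le_exp (sq_nonneg x))
  simpa [Faux] using this

lemma Faux2ub (y : ℝ) (hy : 0 ≤ y) : Faux y ≤ y * Real.exp (y ^ 2) := by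
  have := intervalIntegral.integral_mono_on (μ := volume) (a := 0) (b := y)
    (f := fun t : ℝ => Real.exp (t ^ 2)) (g := fun _ : ℝ => Real.exp (y ^ 2)) hy
    (intE 0 y) (intervalIntegrable_const)
    (fun x hx => Real.exp_le_exp.2 (by nlinarith [hx.1, hx.2]))
  simpa [Faux, mul_comm] using this

lemma Faux2lb' (y : ℝ) (hy : 1 ≤ y) : Real.exp ((y - 1) ^ 2) ≤ Faux y := by
  have h1 : Faux y = (∫ t in (0:ℝ)..(y-1), Real.exp (t ^ 2)) + ∫ t in (y-1)..y, Real.exp (t ^ 2) := by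
    rw [Faux, ← intervalIntegral.integral_add_adjacent_intervals (intE 0 (y-1)) (intE (y-1) y)]
  have h2 : (0:ℝ) ≤ ∫ t in (0:ℝ)..(y-1), Real.exp (t ^ 2) :=
    intervalIntegral.integral_nonneg (by linarith) (fun x _ => (Real.exp_pos _).le)
  have h3 : Real.exp ((y - 1) ^ 2) ≤ ∫ t in (y-1)..y, Real.exp (t ^ 2) := by
    have := intervalIntegral.integral_mono_on (μ := volume) (a := y-1) (b := y)
      (f := fun _ : ℝ => Real.exp ((y-1) ^ 2)) (g := fun t : ℝ => Real.exp (t ^ 2))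
      (by linarith) (intervalIntegrable_const) (intE (y-1) y)
      (fun x hx => Real.exp_le_exp.2 (by nlinarith [hx.1, hx.2]))
    have h4 : (∫ _ in (y-1)..y, Real.exp ((y-1) ^ 2)) = Real.exp ((y-1) ^ 2) := by
      simp
    linarith [this, h4.ge]
  linarith

lemma Faux2top : Tendsto Faux atTop atTop :=
  tendsto_atTop_mono' _ (eventually_atTop.2 ⟨0, fun y hy => Faux2lb y hy⟩) tendsto_id

lemma Faux2neg (y : ℝ) : Faux (-y) = - Faux y := by
  have h2 : (∫ t in (0:ℝ)..y, Real.exp ((-t) ^ 2)) = ∫ t in (-y)..(-(0:ℝ)), Real.exp (t ^ 2) :=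
    intervalIntegral.integral_comp_neg (a := 0) (b := y) (f := fun t : ℝ => Real.exp (t ^ 2))
  simp only [neg_sq, neg_zero] at h2
  have h3 : (∫ t in (0:ℝ)..(-y), Real.exp (t ^ 2)) = - ∫ t in (-y)..(0:ℝ), Real.exp (t ^ 2) :=
    intervalIntegral.integral_symm (-y) 0
  rw [Faux, Faux, h3, ← h2]

lemma Faux2bot : Tendsto Faux atBot atBot := by
  have : Tendsto (fun y => - Faux (-y)) atBot atBot := by
    have h1 : Tendsto (fun y : ℝ => -y) atBot atTop := tendsto_neg_atBot_atTop
    have h2 : Tendsto (fun y : ℝ => Faux (-y)) atBot atTop := Faux2top.comp h1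
    exact (tendsto_neg_atTop_atBot).comp h2
  refine this.congr (fun y => ?_)
  rw [Faux2neg]; ring

lemma Faux2surj : Function.Surjective Faux := Faux2cont.surjective Faux2top Faux2bot


lemma fun_eq_Faux : (fun y : ℝ => (Real.sqrt Real.pi / 2) * erfi y) = Faux := by
  funext y
  unfold erfi Faux
  have hpi : (0:ℝ) < Real.sqrt Real.pi := Real.sqrt_pos.2 Real.pi_pos
  field_simp

lemma Phi_eqF : Phi = Function.invFun Faux := by
  unfold Phi
  rw [fun_eq_Faux]

lemma F_Phi (x : ℝ) : Faux (Phi x) = x := by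
  rw [Phi_eqF]; exact Function.rightInverse_invFun Faux2surj x

lemma Phi_F (y : ℝ) : Phi (Faux y) = y := by
  rw [Phi_eqF]; exact Function.leftInverse_invFun Faux2strictMono.injective y

lemma Phi_mono : Monotone Phi := by
  intro a b hab
  exact Faux2strictMono.le_iff_le.1 (by rw [F_Phi a, F_Phi b]; exact hab)

lemma Phi_zero : Phi 0 = 0 := by
  have h0 : Faux 0 = 0 := intervalIntegral.integral_same
  calc Phi 0 = Phi (Faux 0) := by rw [h0]
  _ = 0 := Phi_F 0

lemma Phi_nonneg (x : ℝ) (hx : 0 ≤ x) : 0 ≤ Phi x := by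
  have := Phi_mono hx
  rwa [Phi_zero] at this

lemma Phi_le_self (x : ℝ) (hx : 0 ≤ x) : Phi x ≤ x := by
  have h := Faux2lb (Phi x) (Phi_nonneg x hx)
  rwa [F_Phi] at h

set_option maxHeartbeats 1000000 in
/-- (Fact (i).) There is `c > 0` such that for all large `n`
and all `0 ≤ i ≤ I`: `φ(iδ) ≤ 1`, `φ(iδ) ≥ c·n^{-1.5ε}`, `Φ(iδ) ≤ ln n`, and
`Φ(iδ) ≥ c·n^{-ε}` whenever `i ≥ 1`. -/
theorem fact_phi_Phi_bounds
    (ε : ℝ) (hε0 : 0 < ε) (hε1 : ε < 1 / 10 ^ 10) :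
    ∃ c : ℝ, 0 < c ∧ ∃ N : ℕ, ∀ n ≥ N, ∀ i ≤ Inat n ε,
      phi (i * del n ε) ≤ 1 ∧
      c * (n : ℝ) ^ (-(1.5) * ε) ≤ phi (i * del n ε) ∧
      Phi (i * del n ε) ≤ Real.log n ∧
      (1 ≤ i → c * (n : ℝ) ^ (-ε) ≤ Phi (i * del n ε)) := by
  have hε1' : ε ≤ 1 := by have h := hε1; norm_num at h; linarith
  refine ⟨Real.exp (-1), Real.exp_pos _, ⌈Real.exp (16/ε)⌉₊, fun n hn i hi => ?_⟩
  have hnR : Real.exp (16/ε) ≤ (n:ℝ) :=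
    le_trans (Nat.le_ceil _) (by exact_mod_cast hn)
  have hn0 : (0:ℝ) < n := lt_of_lt_of_le (Real.exp_pos _) hnR
  have hn1 : (1:ℝ) ≤ n := le_trans (Real.one_le_exp (by positivity)) hnR
  set L := Real.log n with hLdef
  have hL : 16/ε ≤ L := (Real.le_log_iff_exp_le hn0).2 hnR
  have hεL : 16 ≤ ε * L := by
    rw [div_le_iff₀ hε0] at hL; nlinarith
  have hL16 : 16 ≤ L := by
    have h16 : (16:ℝ) ≤ 16/ε := by rw [le_div_iff₀ hε0]; nlinarith
    linarith
  have hL0 : 0 < L := by linarith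
  set X : ℝ := (⌊(n:ℝ)^ε⌋₊ : ℝ) with hXdef
  have hnpow1 : (1:ℝ) ≤ (n:ℝ)^ε := Real.one_le_rpow hn1 hε0.le
  have hX1 : (1:ℝ) ≤ X := by
    have h1f : 1 ≤ ⌊(n:ℝ)^ε⌋₊ := Nat.le_floor (by exact_mod_cast hnpow1)
    rw [hXdef]
    exact_mod_cast h1f
  have hXn : X ≤ (n:ℝ)^ε := Nat.floor_le (by positivity)
  have hX0 : (0:ℝ) < X := lt_of_lt_of_le one_pos hX1
  have hδ : del n ε = 1/X := rfl
  have hδ0 : 0 < del n ε := by rw [hδ]; positivity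
  have hδ1 : del n ε ≤ 1 := by rw [hδ, div_le_one hX0]; exact hX1
  set x := (i:ℝ) * del n ε with hxdef
  have hx0 : 0 ≤ x := mul_nonneg (Nat.cast_nonneg _) hδ0.le
  have hiX : (i:ℝ) ≤ X^2 := by
    have h := hi
    unfold Inat at h
    have : (i:ℝ) ≤ ((⌊(n:ℝ)^ε⌋₊ ^ 2 : ℕ) : ℝ) := by exact_mod_cast h
    rw [hXdef]; push_cast at this ⊢; linarith
  have hxX : x ≤ X := by
    have h := mul_le_mul_of_nonneg_right hiX (le_of_lt (by positivity : (0:ℝ) < 1/X))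
    rw [hxdef, hδ]
    calc (i:ℝ) * (1/X) ≤ X^2 * (1/X) := h
    _ = X := by field_simp
  have hrpow : (n:ℝ)^ε = Real.exp (ε * L) := by
    rw [Real.rpow_def_of_pos hn0, hLdef]; ring_nf
  have hxn : x ≤ Real.exp (ε * L) := by rw [← hrpow]; linarith
  have hPx0 : 0 ≤ Phi x := Phi_nonneg x hx0
  set s := Real.sqrt (ε * L) with hsdef
  have hs0 : 0 ≤ s := Real.sqrt_nonneg _
  have hs2 : s^2 = ε * L := Real.sq_sqrt (by positivity)
  have hs4 : 4 ≤ s := by nlinarith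
  have hPhiB : Phi x ≤ 1 + s := by
    by_cases h : Phi x ≤ 1
    · linarith
    · push_neg at h
      have h1 : Real.exp ((Phi x - 1)^2) ≤ x := by
        have := Faux2lb' (Phi x) h.le
        rwa [F_Phi] at this
      have h3 : (Phi x - 1)^2 ≤ ε * L := Real.exp_le_exp.1 (le_trans h1 hxn)
      have h4 : Phi x - 1 ≤ s := by
        have h5 := Real.sqrt_le_sqrt h3
        rwa [Real.sqrt_sq (by linarith), ← hsdef] at h5
      linarith
  have ha : phi x ≤ 1 := by
    unfold phi
    exact Real.exp_le_one_iff.2 (neg_nonpos.mpr (sq_nonneg _))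
  have hb : Real.exp (-1) * (n:ℝ)^(-(1.5) * ε) ≤ phi x := by
    have hrw : (n:ℝ)^(-(1.5) * ε) = Real.exp (-(1.5) * ε * L) := by
      rw [Real.rpow_def_of_pos hn0, hLdef]; ring_nf
    rw [hrw, ← Real.exp_add]
    unfold phi
    apply Real.exp_le_exp.2
    nlinarith [hPhiB, hPx0, hs2, hs4, sq_nonneg (Phi x)]
  have hc : Phi x ≤ L := by
    have hsL : s ≤ Real.sqrt L := Real.sqrt_le_sqrt (by nlinarith)
    have h5 : Real.sqrt L ^ 2 = L := Real.sq_sqrt hL0.le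
    have h6 : 0 ≤ Real.sqrt L := Real.sqrt_nonneg L
    nlinarith
  refine ⟨ha, hb, hc, fun hi1 => ?_⟩
  have hδx : del n ε ≤ x := by
    have h1i : (1:ℝ) ≤ (i:ℝ) := by exact_mod_cast hi1
    rw [hxdef]; nlinarith
  have hm : Phi (del n ε) ≤ Phi x := Phi_mono hδx
  have hPd0 : 0 ≤ Phi (del n ε) := Phi_nonneg _ hδ0.le
  have hPd1 : Phi (del n ε) ≤ 1 := le_trans (Phi_le_self _ hδ0.le) hδ1
  have hub : del n ε ≤ Phi (del n ε) * Real.exp 1 := by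
    have h1 := Faux2ub (Phi (del n ε)) hPd0
    rw [F_Phi] at h1
    have h2 : Real.exp ((Phi (del n ε))^2) ≤ Real.exp 1 := Real.exp_le_exp.2 (by nlinarith)
    nlinarith [Real.exp_pos 1]
  have hne : (n:ℝ)^(-ε) ≤ del n ε := by
    rw [Real.rpow_neg hn0.le, hδ, one_div]
    exact inv_anti₀ hX0 hXn
  have hkey : Real.exp (-1) * del n ε ≤ Phi (del n ε) := by
    have he : Real.exp (-1) * Real.exp 1 = 1 := by
      rw [← Real.exp_add]; norm_num
    nlinarith [Real.exp_pos (-1)]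
  calc Real.exp (-1) * (n:ℝ)^(-ε) ≤ Real.exp (-1) * del n ε :=
        mul_le_mul_of_nonneg_left hne (Real.exp_pos _).le
  _ ≤ Phi (del n ε) := hkey
  _ ≤ Phi x := hm


end
end TF
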